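/- Let F_q be a finite field and V = F_q^n with n ≥ 3. Suppose τ^{δ₁} ∘ θ_{X₁} ∘ χ_{f₁} = τ^{δ₂} ∘ θ_{X₂} ∘ χ_{f₂} as maps on the vertex set of In(V), where δ₁, δ₂ ∈ {0, 1}, X₁, X₂ are invertible n×n matrices over F_q, and f₁, f₂ are field automorphisms of F_q; here τ sends each vertex W to its orthogonal complement W^⊥ with respect to the standard bilinear form B(α,β) = ∑ᵢ αᵢβᵢ, θ_X sends each vertex W to {Xw : w ∈ W}, and χ_f sends each vertex W to its image under componentwise application of f. Then δ₁ = δ₂, f₁ = f₂, and X₂ = cX₁ for some nonzero scalar c ∈ F_q. -/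

import Mathlib

/-- The vertex type of the subspace inclusion graph: nontrivial proper subspaces. -/
abbrev InVert (F V : Type*) [Field F] [AddCommGroup V] [Module F V] :=
  {W : Submodule F V // W ≠ ⊥ ∧ W ≠ ⊤}

/-- The subspace inclusion graph `In(V)`: vertices are the nontrivial proper subspaces
of `V`, two of them being adjacent iff one is properly contained in the other. -/
def inclGraph (F V : Type*) [Field F] [AddCommGroup V] [Module F V] :
    SimpleGraph (InVert F V) where
  Adj W₁ W₂ := W₁.1 < W₂.1 ∨ W₂.1 < W₁.1
  symm := ⟨fun _ _ h => h.symm⟩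
  loopless := ⟨fun _ h => h.elim (lt_irrefl _) (lt_irrefl _)⟩

/-- Orthogonal complement with respect to the standard bilinear form
`B(α,β) = ∑ i, α i * β i` on `Fin n → F`. -/
def orthComp {F : Type*} [Field F] {n : ℕ} (W : Submodule F (Fin n → F)) :
    Submodule F (Fin n → F) where
  carrier := {v | ∀ w ∈ W, ∑ i, v i * w i = 0}
  zero_mem' := by intro w _; simp
  add_mem' := by
    intro a b ha hb w hw
    simp [add_mul, Finset.sum_add_distrib, ha w hw, hb w hw]
  smul_mem' := by
    intro c a ha w hw
    simp [smul_eq_mul, mul_assoc, ← Finset.mul_sum, ha w hw]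

/-- Componentwise application of a field automorphism `f` to a subspace of `Fin n → F`. -/
def fieldMap {F : Type*} [Field F] {n : ℕ} (f : F ≃+* F) (W : Submodule F (Fin n → F)) :
    Submodule F (Fin n → F) where
  carrier := (fun v i => f (v i)) '' (W : Set (Fin n → F))
  zero_mem' := ⟨0, W.zero_mem, by ext i; simp⟩
  add_mem' := by
    rintro _ _ ⟨a, ha, rfl⟩ ⟨b, hb, rfl⟩
    exact ⟨a + b, W.add_mem ha hb, by ext i; simp⟩
  smul_mem' := by
    rintro c _ ⟨a, ha, rfl⟩
    exact ⟨f.symm c • a, W.smul_mem _ ha, by ext i; simp [map_mul]⟩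

/-! ### Auxiliary material -/

open Module Matrix

section StdBilin
variable {F : Type*} [Field F] {n : ℕ}

/-- The standard dot-product bilinear form on `Fin n → F`. -/
noncomputable def stdBilin (F : Type*) [Field F] (n : ℕ) :
    LinearMap.BilinForm F (Fin n → F) :=
  LinearMap.mk₂ F (fun v w => ∑ i, v i * w i)
    (by intro a b c; simp [add_mul, Finset.sum_add_distrib])
    (by intro a b c; simp [mul_assoc, Finset.mul_sum])
    (by intro a b c; simp [mul_add, Finset.sum_add_distrib])
    (by intro a b c; simp [Finset.mul_sum, mul_left_comm])

lemma stdBilin_apply (v w : Fin n → F) : stdBilin F n v w = ∑ i, v i * w i := rfl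

lemma stdBilin_refl : (stdBilin F n).IsRefl := by
  intro x y hxy
  rw [stdBilin_apply] at hxy ⊢
  rw [Finset.sum_congr rfl fun i _ => mul_comm (y i) (x i)]
  exact hxy

lemma stdBilin_nondegenerate : (stdBilin F n).Nondegenerate := by
  constructor <;>
  · intro v hv
    funext i
    have := hv (Pi.single i 1)
    rw [stdBilin_apply] at this
    simpa [Pi.single_apply] using this

lemma orthComp_eq (W : Submodule F (Fin n → F)) :
    orthComp W = (stdBilin F n).orthogonal W := by
  ext v
  constructor
  · intro hv w hw
    have := hv w hw
    rw [stdBilin_apply]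
    rw [Finset.sum_congr rfl fun i _ => mul_comm (w i) (v i)]
    exact this
  · intro hv w hw
    have := hv w hw
    rw [stdBilin_apply] at this
    rw [Finset.sum_congr rfl fun i _ => mul_comm (v i) (w i)]
    exact this

lemma orthComp_orthComp (W : Submodule F (Fin n → F)) :
    orthComp (orthComp W) = W := by
  rw [orthComp_eq, orthComp_eq,
    LinearMap.BilinForm.orthogonal_orthogonal stdBilin_nondegenerate stdBilin_refl]

lemma finrank_orthComp (W : Submodule F (Fin n → F)) :
    finrank F (orthComp W) = n - finrank F W := by
  rw [orthComp_eq,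
    LinearMap.BilinForm.finrank_orthogonal stdBilin_nondegenerate,
    Module.finrank_fin_fun]

end StdBilin

section Tmap
variable {F : Type*} [Field F] {n : ℕ}

/-- The semilinear map `v ↦ X *ᵥ (f ∘ v)`. -/
def Tmap (f : F ≃+* F) (X : Matrix (Fin n) (Fin n) F) (v : Fin n → F) : Fin n → F :=
  X *ᵥ (fun i => f (v i))

lemma Tmap_add (f : F ≃+* F) (X : Matrix (Fin n) (Fin n) F) (u v : Fin n → F) :
    Tmap f X (u + v) = Tmap f X u + Tmap f X v := by
  have he : (fun i => f ((u + v) i)) = (fun i => f (u i)) + fun i => f (v i) := by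
    funext i; simp
  unfold Tmap
  rw [he, Matrix.mulVec_add]

lemma Tmap_smul (f : F ≃+* F) (X : Matrix (Fin n) (Fin n) F) (a : F) (v : Fin n → F) :
    Tmap f X (a • v) = f a • Tmap f X v := by
  have he : (fun i => f ((a • v) i)) = f a • fun i => f (v i) := by
    funext i; simp [_root_.map_mul]
  unfold Tmap
  rw [he, Matrix.mulVec_smul]

lemma Tmap_ne_zero {f : F ≃+* F} {X : Matrix (Fin n) (Fin n) F} (hX : IsUnit X)
    {v : Fin n → F} (hv : v ≠ 0) : Tmap f X v ≠ 0 := by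
  have hinj := Matrix.mulVec_injective_iff_isUnit.mpr hX
  intro h0
  apply hv
  have h1 : (fun i => f (v i)) = 0 := by
    apply hinj
    rw [Matrix.mulVec_zero]
    exact h0
  funext i
  have := congrFun h1 i
  simpa using this

lemma Tmap_single (f : F ≃+* F) (X : Matrix (Fin n) (Fin n) F) (i : Fin n) :
    Tmap f X (Pi.single i 1) = X *ᵥ Pi.single i 1 := by
  have he : (fun j => f ((Pi.single i (1:F) : Fin n → F) j)) = Pi.single i (1:F) := by
    funext j; simp [Pi.single_apply, apply_ite f]
  unfold Tmap
  rw [he]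

lemma map_fieldMap_span (f : F ≃+* F) (X : Matrix (Fin n) (Fin n) F) (v : Fin n → F) :
    Submodule.map X.mulVecLin (fieldMap f (Submodule.span F {v})) =
      Submodule.span F {Tmap f X v} := by
  have h1 : fieldMap f (Submodule.span F {v}) = Submodule.span F {fun i => f (v i)} := by
    ext x
    rw [Submodule.mem_span_singleton]
    constructor
    · rintro ⟨w, hw, rfl⟩
      obtain ⟨a, rfl⟩ := Submodule.mem_span_singleton.mp hw
      exact ⟨f a, by funext i; simp [_root_.map_mul]⟩
    · rintro ⟨a, rfl⟩
      refine ⟨f.symm a • v, Submodule.smul_mem _ _ (Submodule.mem_span_singleton_self v), ?_⟩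
      funext i
      simp [_root_.map_mul]
  rw [h1, Submodule.map_span, Set.image_singleton, Matrix.mulVecLin_apply]
  rfl

lemma Tmap_indep {f : F ≃+* F} {X : Matrix (Fin n) (Fin n) F} (hX : IsUnit X)
    {u v : Fin n → F} (hind : ∀ a b : F, a • u + b • v = 0 → a = 0 ∧ b = 0)
    (a b : F) (hab : a • Tmap f X u + b • Tmap f X v = 0) : a = 0 ∧ b = 0 := by
  have hinj := Matrix.mulVec_injective_iff_isUnit.mpr hX
  have h1 : X *ᵥ (a • (fun i => f (u i)) + b • (fun i => f (v i))) = X *ᵥ 0 := by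
    rw [Matrix.mulVec_add, Matrix.mulVec_smul, Matrix.mulVec_smul, Matrix.mulVec_zero]
    exact hab
  have h2 := hinj h1
  have h3 : f.symm a • u + f.symm b • v = 0 := by
    funext i
    have h4 := congrFun h2 i
    simp only [Pi.add_apply, Pi.smul_apply, smul_eq_mul, Pi.zero_apply] at h4 ⊢
    have h5 : f (f.symm a * u i + f.symm b * v i) = 0 := by
      rw [_root_.map_add, _root_.map_mul, _root_.map_mul, RingEquiv.apply_symm_apply,
        RingEquiv.apply_symm_apply]
      exact h4
    exact f.injective (h5.trans (map_zero f).symm)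
  obtain ⟨ha, hb⟩ := hind _ _ h3
  constructor
  · have := congrArg f ha; simpa using this
  · have := congrArg f hb; simpa using this

/-- Elementary two-vector independence criterion. -/
lemma indep_of_coords {u v : Fin n → F} {i j : Fin n}
    (huj : u j = 0) (hvi : v i = 0) (hui : u i ≠ 0) (hvj : v j ≠ 0)
    (a b : F) (hab : a • u + b • v = 0) : a = 0 ∧ b = 0 := by
  have hi := congrFun hab i
  have hj := congrFun hab j
  simp only [Pi.add_apply, Pi.smul_apply, smul_eq_mul, Pi.zero_apply, hvi, huj,
    mul_zero, add_zero, zero_add] at hi hj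
  exact ⟨(mul_eq_zero.mp hi).resolve_right hui, (mul_eq_zero.mp hj).resolve_right hvj⟩

end Tmap

/-- Uniqueness of the decomposition `τ^δ ∘ θ_X ∘ χ_f`: if two such composites agree on
every vertex of `In(F_q^n)`, `n ≥ 3`, then the exponents of `τ` agree, the field
automorphisms agree, and the matrices agree up to a nonzero scalar. -/
theorem inclGraph_aut_decomposition_unique
    (F : Type*) [Field F] [Fintype F] (n : ℕ) (hn : 3 ≤ n)
    (δ₁ δ₂ : ℕ) (hδ₁ : δ₁ ≤ 1) (hδ₂ : δ₂ ≤ 1)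
    (X₁ X₂ : Matrix (Fin n) (Fin n) F) (hX₁ : IsUnit X₁) (hX₂ : IsUnit X₂)
    (f₁ f₂ : F ≃+* F)
    (h : ∀ W : Submodule F (Fin n → F), W ≠ ⊥ → W ≠ ⊤ →
      orthComp^[δ₁] (Submodule.map X₁.mulVecLin (fieldMap f₁ W)) =
        orthComp^[δ₂] (Submodule.map X₂.mulVecLin (fieldMap f₂ W))) :
    δ₁ = δ₂ ∧ f₁ = f₂ ∧ ∃ c : F, c ≠ 0 ∧ X₂ = c • X₁ := by
  classical
  -- indices and standard basis vectors
  have hn0 : 0 < n := by omega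
  have hn1 : 1 < n := by omega
  set i0 : Fin n := ⟨0, hn0⟩ with hi0def
  set i1 : Fin n := ⟨1, hn1⟩ with hi1def
  set ε : Fin n → (Fin n → F) := fun i => Pi.single i (1 : F) with hεdef
  have hε_self : ∀ i, ε i i = 1 := fun i => Pi.single_eq_same i 1
  have hε_ne : ∀ i j : Fin n, i ≠ j → ε i j = 0 := by
    intro i j hij
    exact Pi.single_eq_of_ne (Ne.symm hij) 1
  have hε_ne_zero : ∀ i, ε i ≠ 0 := by
    intro i h0
    have := congrFun h0 i
    rw [hε_self i] at this
    exact one_ne_zero this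
  -- spans of nonzero vectors are nontrivial proper subspaces
  have hspan_bot : ∀ v : Fin n → F, v ≠ 0 → Submodule.span F {v} ≠ ⊥ := by
    intro v hv hb
    exact hv (Submodule.span_singleton_eq_bot.mp hb)
  have hspan_top : ∀ v : Fin n → F, v ≠ 0 → Submodule.span F {v} ≠ ⊤ := by
    intro v hv ht
    have h1 : finrank F (Submodule.span F {v}) = 1 := finrank_span_singleton hv
    rw [ht, finrank_top, Module.finrank_fin_fun] at h1
    omega
  -- the hypothesis specialized to lines
  have hline : ∀ v : Fin n → F, v ≠ 0 →
      orthComp^[δ₁] (Submodule.span F {Tmap f₁ X₁ v}) =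
        orthComp^[δ₂] (Submodule.span F {Tmap f₂ X₂ v}) := by
    intro v hv
    have := h (Submodule.span F {v}) (hspan_bot v hv) (hspan_top v hv)
    rwa [map_fieldMap_span, map_fieldMap_span] at this
  -- a line is never the orthogonal complement of a line
  have hdim : ∀ u w : Fin n → F, u ≠ 0 → w ≠ 0 →
      Submodule.span F {u} ≠ orthComp (Submodule.span F {w}) := by
    intro u w hu hw heq
    have h1 : finrank F (Submodule.span F {u}) = 1 := finrank_span_singleton hu
    have h2 : finrank F (orthComp (Submodule.span F {w})) = n - 1 := by
      rw [finrank_orthComp, finrank_span_singleton hw]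
    rw [heq, h2] at h1
    omega
  have hT1e : ∀ i, Tmap f₁ X₁ (ε i) ≠ 0 := fun i => Tmap_ne_zero hX₁ (hε_ne_zero i)
  have hT2e : ∀ i, Tmap f₂ X₂ (ε i) ≠ 0 := fun i => Tmap_ne_zero hX₂ (hε_ne_zero i)
  -- step 1: the exponents agree
  have hδeq : δ₁ = δ₂ := by
    have hl := hline (ε i0) (hε_ne_zero i0)
    interval_cases δ₁ <;> interval_cases δ₂
    · rfl
    · simp only [Function.iterate_zero, Function.iterate_one, id_eq] at hl
      exact absurd hl (hdim _ _ (hT1e i0) (hT2e i0))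
    · simp only [Function.iterate_zero, Function.iterate_one, id_eq] at hl
      exact absurd hl.symm (hdim _ _ (hT2e i0) (hT1e i0))
    · rfl
  -- step 2: cancel the orthogonal complements
  have hspan : ∀ v : Fin n → F, v ≠ 0 →
      Submodule.span F {Tmap f₂ X₂ v} = Submodule.span F {Tmap f₁ X₁ v} := by
    intro v hv
    have hl := hline v hv
    rw [← hδeq] at hl
    interval_cases δ₁
    · simpa using hl.symm
    · simp only [Function.iterate_one] at hl
      have := congrArg orthComp hl
      rw [orthComp_orthComp, orthComp_orthComp] at this
      exact this.symm
  -- step 3: scalar relating the two semilinear maps on each line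
  have hc : ∀ v : Fin n → F, v ≠ 0 →
      ∃ c : F, c ≠ 0 ∧ Tmap f₂ X₂ v = c • Tmap f₁ X₁ v := by
    intro v hv
    have hmem : Tmap f₂ X₂ v ∈ Submodule.span F {Tmap f₁ X₁ v} := by
      rw [← hspan v hv]
      exact Submodule.mem_span_singleton_self _
    obtain ⟨c, hcv⟩ := Submodule.mem_span_singleton.mp hmem
    refine ⟨c, ?_, hcv.symm⟩
    rintro rfl
    exact Tmap_ne_zero hX₂ hv (by rw [← hcv, zero_smul])
  -- constancy of the scalar on independent pairs
  have hconst : ∀ (u v : Fin n → F) (cu cv cw : F),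
      (∀ a b : F, a • u + b • v = 0 → a = 0 ∧ b = 0) →
      Tmap f₂ X₂ u = cu • Tmap f₁ X₁ u →
      Tmap f₂ X₂ v = cv • Tmap f₁ X₁ v →
      Tmap f₂ X₂ (u + v) = cw • Tmap f₁ X₁ (u + v) →
      cu = cw ∧ cv = cw := by
    intro u v cu cv cw hind hu hv hw
    have key : cu • Tmap f₁ X₁ u + cv • Tmap f₁ X₁ v
        = cw • Tmap f₁ X₁ u + cw • Tmap f₁ X₁ v := by
      rw [← hu, ← hv, ← Tmap_add, hw, Tmap_add, smul_add]
    have e1 : (cu - cw) • Tmap f₁ X₁ u + (cv - cw) • Tmap f₁ X₁ v = 0 := by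
      rw [sub_smul, sub_smul]
      rw [show cu • Tmap f₁ X₁ u - cw • Tmap f₁ X₁ u + (cv • Tmap f₁ X₁ v - cw • Tmap f₁ X₁ v)
          = (cu • Tmap f₁ X₁ u + cv • Tmap f₁ X₁ v)
            - (cw • Tmap f₁ X₁ u + cw • Tmap f₁ X₁ v) by abel, key, sub_self]
    obtain ⟨h1, h2⟩ := Tmap_indep hX₁ hind _ _ e1
    exact ⟨by linear_combination h1, by linear_combination h2⟩
  -- the scalar at ε i0
  obtain ⟨c, hc0, hce0⟩ := hc (ε i0) (hε_ne_zero i0)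
  have hi01 : i0 ≠ i1 := by
    intro hh
    rw [Fin.ext_iff] at hh
    simp [hi0def, hi1def] at hh
  -- the scalar is the same at every ε i
  have hcall : ∀ i : Fin n, Tmap f₂ X₂ (ε i) = c • Tmap f₁ X₁ (ε i) := by
    intro i
    by_cases hii : i = i0
    · rw [hii]; exact hce0
    have hind : ∀ a b : F, a • ε i0 + b • ε i = 0 → a = 0 ∧ b = 0 := by
      intro a b hab
      exact indep_of_coords (hε_ne i0 i (fun hh => hii hh.symm)) (hε_ne i i0 hii)
        (by rw [hε_self]; exact one_ne_zero) (by rw [hε_self]; exact one_ne_zero) a b hab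
    have hsum_ne : ε i0 + ε i ≠ 0 := by
      intro h0
      have := congrFun h0 i0
      rw [Pi.add_apply, hε_self, hε_ne i i0 hii, Pi.zero_apply, add_zero] at this
      exact one_ne_zero this
    obtain ⟨cv, _, hvv⟩ := hc (ε i) (hε_ne_zero i)
    obtain ⟨cw, _, hww⟩ := hc (ε i0 + ε i) hsum_ne
    obtain ⟨h1, h2⟩ := hconst (ε i0) (ε i) c cv cw hind hce0 hvv hww
    rw [hvv, h2, ← h1]
  -- the automorphisms agree
  have hf : f₁ = f₂ := by
    ext a
    by_cases ha : a = 0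
    · rw [ha, map_zero, map_zero]
    have hv_ne : a • ε i1 ≠ 0 := smul_ne_zero ha (hε_ne_zero i1)
    have hind : ∀ x y : F, x • ε i0 + y • (a • ε i1) = 0 → x = 0 ∧ y = 0 := by
      intro x y hxy
      refine indep_of_coords (u := ε i0) (v := a • ε i1) (i := i0) (j := i1)
        (hε_ne i0 i1 hi01) ?_ ?_ ?_ x y hxy
      · rw [Pi.smul_apply, hε_ne i1 i0 (Ne.symm hi01), smul_zero]
      · rw [hε_self]; exact one_ne_zero
      · rw [Pi.smul_apply, hε_self, smul_eq_mul, mul_one]; exact ha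
    have hsum_ne : ε i0 + a • ε i1 ≠ 0 := by
      intro h0
      have := congrFun h0 i0
      rw [Pi.add_apply, hε_self, Pi.smul_apply, hε_ne i1 i0 (Ne.symm hi01), smul_zero,
        Pi.zero_apply, add_zero] at this
      exact one_ne_zero this
    obtain ⟨cv, _, hvv⟩ := hc (a • ε i1) hv_ne
    obtain ⟨cw, _, hww⟩ := hc (ε i0 + a • ε i1) hsum_ne
    obtain ⟨h1, h2⟩ := hconst (ε i0) (a • ε i1) c cv cw hind hce0 hvv hww
    have hcv : cv = c := by rw [h2, ← h1]
    -- compute Tmap f₂ X₂ (a • ε i1) two ways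
    have e1 : (f₂ a * c) • Tmap f₁ X₁ (ε i1) = (c * f₁ a) • Tmap f₁ X₁ (ε i1) := by
      rw [← smul_smul, ← smul_smul, ← hcall i1, ← Tmap_smul, hvv, hcv, Tmap_smul]
    have e2 : f₂ a * c = c * f₁ a := by
      by_contra hne
      have := sub_smul (f₂ a * c) (c * f₁ a) (Tmap f₁ X₁ (ε i1))
      rw [e1, sub_self] at this
      rcases smul_eq_zero.mp this with h' | h'
      · exact hne (sub_eq_zero.mp h')
      · exact hT1e i1 h'
    have : c * f₂ a = c * f₁ a := by rw [mul_comm c (f₂ a)]; exact e2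
    exact (mul_left_cancel₀ hc0 this).symm
  -- the matrices agree up to the scalar c
  refine ⟨hδeq, hf, c, hc0, ?_⟩
  ext j i
  have hcol := hcall i
  rw [Tmap_single, Tmap_single] at hcol
  have := congrFun hcol j
  rw [Matrix.mulVec_single] at this
  simp only [Matrix.mulVec_single, mul_one, Pi.smul_apply, smul_eq_mul, MulOpposite.op_one,
    one_smul, Matrix.col_apply] at this
  rw [Matrix.smul_apply, smul_eq_mul]
  exact this
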